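/- Let ρ(z) = −conj(z) and let τ : S¹ × S¹ × D² → S¹ × S¹ × D² be the involution τ(t,z,w) = (t, conj(z), ρ(w)). Then the quotient topological space of S¹ × S¹ × D² by the equivalence relation identifying a point with its image under τ is homeomorphic to S¹ × D³, the product of the circle with the closed unit ball in ℝ³. -/

import Mathlib

/-- The unit circle in the complex plane. -/
def S1 : Set ℂ := {z : ℂ | ‖z‖ = 1}

/-- The closed unit disk in the complex plane. -/
def D2 : Set ℂ := {w : ℂ | ‖w‖ ≤ 1}

/-- The involution `τ(t,z,w) = (t, conj z, ρ(w))` of `S¹ × S¹ × D²`, where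
`ρ(w) = −conj w` is reflection in the imaginary axis. -/
def tau (p : ↥(S1 ×ˢ S1 ×ˢ D2)) : ↥(S1 ×ˢ S1 ×ˢ D2) :=
  ⟨(p.val.1, (starRingEnd ℂ) p.val.2.1, -(starRingEnd ℂ) p.val.2.2), by
    obtain ⟨h1, h2, h3⟩ := p.property
    simp only [S1, D2, Set.mem_prod, Set.mem_setOf_eq] at *
    exact ⟨h1, by simp [h2], by simp [h3]⟩⟩

/-! ### Auxiliary: rescaling maps between unit balls of comparable gauges -/

section Resc

variable {V : Type*} [NormedAddCommGroup V] [NormedSpace ℝ V]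

open Classical in
/-- rescaling map sending the `‖·‖`-ball to the `N`-ball -/
noncomputable def resc (N : V → ℝ) (v : V) : V := if v = 0 then 0 else (N v / ‖v‖) • v

open Classical in
/-- rescaling map sending the `N`-ball to the `‖·‖`-ball -/
noncomputable def cser (N : V → ℝ) (v : V) : V := if v = 0 then 0 else (‖v‖ / N v) • v

/-- a "gauge" comparable to the norm -/
structure GoodN (N : V → ℝ) : Prop where
  cont : Continuous N
  hom : ∀ (c : ℝ), 0 ≤ c → ∀ v, N (c • v) = c * N v
  ub : ∀ v, N v ≤ 2 * ‖v‖
  lb : ∀ v, ‖v‖ ≤ 2 * N v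

namespace GoodN

variable {N : V → ℝ}

theorem nonneg (h : GoodN N) (v : V) : 0 ≤ N v := by
  have := h.lb v; have := norm_nonneg v; linarith

theorem pos (h : GoodN N) {v : V} (hv : v ≠ 0) : 0 < N v := by
  have h1 : (0:ℝ) < ‖v‖ := norm_pos_iff.mpr hv
  linarith [h.lb v]

theorem N_zero (h : GoodN N) : N 0 = 0 := by
  have h0 : N 0 ≤ 0 := by simpa using h.ub 0
  exact le_antisymm h0 (h.nonneg 0)

theorem norm_resc (h : GoodN N) (v : V) : ‖resc N v‖ = N v := by
  by_cases hv : v = 0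
  · subst hv; simp [resc, h.N_zero]
  · have hn : (0:ℝ) < ‖v‖ := norm_pos_iff.mpr hv
    rw [resc, if_neg hv, norm_smul, Real.norm_eq_abs,
      abs_of_nonneg (div_nonneg (h.nonneg v) hn.le)]
    field_simp

theorem N_cser (h : GoodN N) (v : V) : N (cser N v) = ‖v‖ := by
  by_cases hv : v = 0
  · subst hv; simp [cser, h.N_zero]
  · have hn : (0:ℝ) < ‖v‖ := norm_pos_iff.mpr hv
    have hNv := h.pos hv
    rw [cser, if_neg hv, h.hom _ (div_nonneg hn.le (h.nonneg v))]
    field_simp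

theorem resc_ne_zero (h : GoodN N) {v : V} (hv : v ≠ 0) : resc N v ≠ 0 := by
  intro h0
  have := h.norm_resc v
  rw [h0, norm_zero] at this
  exact (h.pos hv).ne this
theorem cser_ne_zero (h : GoodN N) {v : V} (hv : v ≠ 0) : cser N v ≠ 0 := by
  intro h0
  have := h.N_cser v
  rw [h0, h.N_zero] at this
  have := norm_pos_iff.mpr hv
  linarith

theorem cser_resc (h : GoodN N) (v : V) : cser N (resc N v) = v := by
  by_cases hv : v = 0
  · simp [hv, resc, cser]
  · have hn : (0:ℝ) < ‖v‖ := norm_pos_iff.mpr hv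
    have hNv := h.pos hv
    have h2 : N (resc N v) = N v / ‖v‖ * N v := by
      rw [resc, if_neg hv, h.hom _ (by positivity)]
    rw [cser, if_neg (h.resc_ne_zero hv), h.norm_resc, h2, resc, if_neg hv, smul_smul]
    have : N v / (N v / ‖v‖ * N v) * (N v / ‖v‖) = 1 := by field_simp
    rw [this, one_smul]

theorem resc_cser (h : GoodN N) (v : V) : resc N (cser N v) = v := by
  by_cases hv : v = 0
  · simp [hv, resc, cser]
  · have hn : (0:ℝ) < ‖v‖ := norm_pos_iff.mpr hv
    have hNv := h.pos hv
    have h2 : ‖cser N v‖ = ‖v‖ / N v * ‖v‖ := by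
      rw [cser, if_neg hv, norm_smul, Real.norm_eq_abs, abs_of_nonneg (by positivity)]
    rw [resc, if_neg (h.cser_ne_zero hv), h.N_cser, h2, cser, if_neg hv, smul_smul]
    have : ‖v‖ / (‖v‖ / N v * ‖v‖) * (‖v‖ / N v) = 1 := by field_simp
    rw [this, one_smul]

theorem continuous_resc (h : GoodN N) : Continuous (resc N) := by
  rw [continuous_iff_continuousAt]
  intro v
  by_cases hv : v = 0
  · subst hv
    have hb : ∀ u : V, ‖resc N u‖ ≤ 2 * ‖u‖ := fun u => by
      rw [h.norm_resc]; exact h.ub u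
    have ht : Filter.Tendsto (resc N) (nhds 0) (nhds 0) := by
      apply squeeze_zero_norm hb
      simpa using (continuous_norm.tendsto (0:V)).const_mul 2
    have h0 : resc N (0:V) = 0 := by simp [resc]
    simpa [ContinuousAt, h0] using ht
  · have hcong : (fun u => (N u / ‖u‖) • u) =ᶠ[nhds v] resc N := by
      filter_upwards [isOpen_ne.mem_nhds hv] with u hu
      rw [resc, if_neg hu]
    apply ContinuousAt.congr _ hcong
    exact ((h.cont.continuousAt.div continuous_norm.continuousAt
      (norm_ne_zero_iff.mpr hv))).smul continuousAt_id

theorem continuous_cser (h : GoodN N) : Continuous (cser N) := by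
  rw [continuous_iff_continuousAt]
  intro v
  by_cases hv : v = 0
  · subst hv
    have hb : ∀ u : V, ‖cser N u‖ ≤ 2 * ‖u‖ := fun u => by
      by_cases hu : u = 0
      · simp [hu, cser]
      · have hn : (0:ℝ) < ‖u‖ := norm_pos_iff.mpr hu
        have hNu := h.pos hu
        rw [cser, if_neg hu, norm_smul, Real.norm_eq_abs,
          abs_of_nonneg (by positivity : (0:ℝ) ≤ ‖u‖ / N u)]
        rw [div_mul_eq_mul_div, div_le_iff₀ hNu]
        nlinarith [h.lb u]
    have ht : Filter.Tendsto (cser N) (nhds 0) (nhds 0) := by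
      apply squeeze_zero_norm hb
      simpa using (continuous_norm.tendsto (0:V)).const_mul 2
    have h0 : cser N (0:V) = 0 := by simp [cser]
    simpa [ContinuousAt, h0] using ht
  · have hcong : (fun u => (‖u‖ / N u) • u) =ᶠ[nhds v] cser N := by
      filter_upwards [isOpen_ne.mem_nhds hv] with u hu
      rw [cser, if_neg hu]
    apply ContinuousAt.congr _ hcong
    exact ((continuous_norm.continuousAt.div h.cont.continuousAt
      (h.pos hv).ne')).smul continuousAt_id

end GoodN
end Resc

/-! ### The two gauges -/

section Gauges

/-- sup-norm gauge on ℂ (unit ball = square) -/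
def Nsq (w : ℂ) : ℝ := max |w.re| |w.im|

theorem goodNsq : GoodN Nsq := by
  refine ⟨Complex.continuous_re.abs.max Complex.continuous_im.abs, ?_, ?_, ?_⟩
  · intro c hc w
    simp only [Nsq, Complex.smul_re, Complex.smul_im, smul_eq_mul, abs_mul, abs_of_nonneg hc]
    exact (mul_max_of_nonneg _ _ hc).symm
  · intro w
    have h1 := Complex.abs_re_le_norm w
    have h2 := Complex.abs_im_le_norm w
    have h3 : (0:ℝ) ≤ ‖w‖ := norm_nonneg w
    simp only [Nsq, max_le_iff]
    constructor <;> linarith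
  · intro w
    have h1 := Complex.norm_le_abs_re_add_abs_im w
    have h2 : |w.re| ≤ Nsq w := le_max_left _ _
    have h3 : |w.im| ≤ Nsq w := le_max_right _ _
    linarith

/-- Euclidean 3-space -/
abbrev E3 := EuclideanSpace ℝ (Fin 3)

/-- cylindrical gauge on ℝ³ (unit ball = solid cylinder D² × [−1,1]) -/
noncomputable def Ncyl (v : E3) : ℝ := max (Real.sqrt ((v 0)^2 + (v 1)^2)) |v 2|

noncomputable def mkv (P Q Y : ℝ) : E3 := (WithLp.equiv 2 (Fin 3 → ℝ)).symm ![P, Q, Y]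

@[simp] theorem mkv_apply0 (P Q Y : ℝ) : mkv P Q Y 0 = P := by
  simp [mkv]
@[simp] theorem mkv_apply1 (P Q Y : ℝ) : mkv P Q Y 1 = Q := by
  simp [mkv]
@[simp] theorem mkv_apply2 (P Q Y : ℝ) : mkv P Q Y 2 = Y := by
  simp [mkv]

theorem mkv_self (v : E3) : mkv (v 0) (v 1) (v 2) = v := by
  ext i
  fin_cases i <;> simp [mkv]

theorem continuous_mkv {α : Type*} [TopologicalSpace α] {f g k : α → ℝ}
    (hf : Continuous f) (hg : Continuous g) (hk : Continuous k) :
    Continuous fun x => mkv (f x) (g x) (k x) := by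
  unfold mkv
  apply Continuous.comp (PiLp.continuous_toLp 2 (fun _ : Fin 3 => ℝ))
  apply continuous_pi
  intro i
  fin_cases i <;> simpa

theorem norm_E3 (v : E3) : ‖v‖ = Real.sqrt ((v 0)^2 + (v 1)^2 + (v 2)^2) := by
  rw [EuclideanSpace.norm_eq]
  congr 1
  rw [Fin.sum_univ_three]
  simp [Real.norm_eq_abs, sq_abs]

theorem goodNcyl : GoodN Ncyl := by
  refine ⟨?_, ?_, ?_, ?_⟩
  · apply Continuous.max
    · apply Real.continuous_sqrt.comp
      apply Continuous.add <;> exact (((EuclideanSpace.proj (𝕜 := ℝ) _).continuous).pow 2)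
    · exact ((EuclideanSpace.proj (𝕜 := ℝ) 2).continuous).abs
  · intro c hc v
    have hs : ∀ i, (c • v) i = c * v i := fun i => rfl
    simp only [Ncyl, hs, abs_mul, abs_of_nonneg hc]
    rw [show (c * v 0)^2 + (c * v 1)^2 = c^2 * ((v 0)^2 + (v 1)^2) from by ring,
      Real.sqrt_mul (sq_nonneg c), Real.sqrt_sq hc]
    exact (mul_max_of_nonneg _ _ hc).symm
  · intro v
    rw [norm_E3]
    have h1 : Real.sqrt ((v 0)^2 + (v 1)^2) ≤ Real.sqrt ((v 0)^2 + (v 1)^2 + (v 2)^2) :=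
      Real.sqrt_le_sqrt (by nlinarith [sq_nonneg (v 2)])
    have h2 : |v 2| ≤ Real.sqrt ((v 0)^2 + (v 1)^2 + (v 2)^2) := by
      rw [← Real.sqrt_sq_eq_abs]
      exact Real.sqrt_le_sqrt (by nlinarith [sq_nonneg (v 0), sq_nonneg (v 1)])
    have h0 : (0:ℝ) ≤ Real.sqrt ((v 0)^2 + (v 1)^2 + (v 2)^2) := Real.sqrt_nonneg _
    simp only [Ncyl, max_le_iff]
    constructor <;> linarith
  · intro v
    rw [norm_E3]
    have hm : (0:ℝ) ≤ Ncyl v := le_trans (abs_nonneg _) (le_max_right _ _)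
    have h1 : (v 0)^2 + (v 1)^2 ≤ Ncyl v ^ 2 := by
      rw [← Real.sq_sqrt (by positivity : (0:ℝ) ≤ (v 0)^2 + (v 1)^2)]
      exact pow_le_pow_left₀ (Real.sqrt_nonneg _) (le_max_left _ _) 2
    have h2 : (v 2)^2 ≤ Ncyl v ^ 2 := by
      rw [← sq_abs]
      exact pow_le_pow_left₀ (abs_nonneg _) (le_max_right _ _) 2
    rw [show 2 * Ncyl v = Real.sqrt ((2 * Ncyl v)^2) from (Real.sqrt_sq (by linarith)).symm]
    exact Real.sqrt_le_sqrt (by nlinarith)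

end Gauges

/-! ### The Joukowski-type fold -/

theorem fold {a b a' b' x x' : ℝ} (hz : a^2 + b^2 = 1) (hz' : a'^2 + b'^2 = 1)
    (h1 : a * Real.cosh x = a' * Real.cosh x')
    (h2 : b * Real.sinh x = b' * Real.sinh x') :
    (a' = a ∧ b' = b ∧ x' = x) ∨ (a' = a ∧ b' = -b ∧ x' = -x) := by
  have hc : Real.cosh x ^ 2 = Real.sinh x ^ 2 + 1 := Real.cosh_sq x
  have hc' : Real.cosh x' ^ 2 = Real.sinh x' ^ 2 + 1 := Real.cosh_sq x'
  have hcp : 0 < Real.cosh x := Real.cosh_pos x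
  have hcp' : 0 < Real.cosh x' := Real.cosh_pos x'
  set S := Real.sinh x with hSdef
  set S' := Real.sinh x' with hS'def
  have e1 : a^2 * (S^2+1) = a'^2 * (S'^2+1) := by
    have h1sq : (a * Real.cosh x)^2 = (a' * Real.cosh x')^2 := by rw [h1]
    calc a^2 * (S^2+1) = (a * Real.cosh x)^2 := by rw [← hc]; ring
    _ = (a' * Real.cosh x')^2 := h1sq
    _ = a'^2 * (S'^2+1) := by rw [← hc']; ring
  have e2 : b^2 * S^2 = b'^2 * S'^2 := by
    have h2sq : (b * S)^2 = (b' * S')^2 := by rw [h2]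
    calc b^2 * S^2 = (b * S)^2 := by ring
    _ = (b' * S')^2 := h2sq
    _ = b'^2 * S'^2 := by ring
  have e5 : a^2 + S^2 = a'^2 + S'^2 := by linear_combination e1 + e2 - S^2 * hz + S'^2 * hz'
  have key : (a'^2 - a^2) * (a'^2 - (S^2+1)) = 0 := by linear_combination e1 - a'^2 * e5
  rcases mul_eq_zero.mp key with hA | hB
  · have hA' : a'^2 = a^2 := by linarith [sub_eq_zero.mp hA]
    have eS : S'^2 = S^2 := by linarith
    have hcc : Real.cosh x' = Real.cosh x := by
      have hsq : Real.cosh x'^2 = Real.cosh x^2 := by rw [hc, hc', eS]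
      have hfac : (Real.cosh x' - Real.cosh x) * (Real.cosh x' + Real.cosh x) = 0 := by
        linear_combination hsq
      rcases mul_eq_zero.mp hfac with h | h
      · linarith [sub_eq_zero.mp h]
      · linarith
    have ha : a' = a := by
      have : a * Real.cosh x = a' * Real.cosh x := by rw [h1, hcc]
      exact (mul_right_cancel₀ hcp.ne' this).symm
    by_cases hS0 : S = 0
    · have hx : x = 0 := Real.sinh_injective (by rw [← Real.sinh_zero] at hS0; exact hS0)
      have hS'2 : S'^2 = 0 := by rw [eS, hS0]; ring
      have hS'0 : S' = 0 := sq_eq_zero_iff.mp hS'2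
      have hx' : x' = 0 := Real.sinh_injective (by rw [← Real.sinh_zero] at hS'0; exact hS'0)
      have hb2 : b'^2 = b^2 := by nlinarith
      have hfac : (b' - b) * (b' + b) = 0 := by linear_combination hb2
      rcases mul_eq_zero.mp hfac with h | h
      · exact Or.inl ⟨ha, by linarith, by rw [hx, hx']⟩
      · exact Or.inr ⟨ha, by linarith, by rw [hx, hx']; ring⟩
    · have hfacS : (S' - S) * (S' + S) = 0 := by linear_combination eS
      rcases mul_eq_zero.mp hfacS with h | h
      · have hSS : S' = S := by linarith
        have hb : b' = b := by
          have hh : b * S = b' * S := by rw [h2, hSS]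
          exact (mul_right_cancel₀ hS0 hh).symm
        have hx : x' = x := Real.sinh_injective hSS
        exact Or.inl ⟨ha, hb, hx⟩
      · have hSS : S' = -S := by linarith
        have hb : b' = -b := by
          have hbS : b * S = b' * -S := by rw [h2, hSS]
          have hh : (-b') * S = b * S := by linarith
          have := mul_right_cancel₀ hS0 hh
          linarith
        have hx : x' = -x := Real.sinh_injective (by rw [Real.sinh_neg]; exact hSS)
        exact Or.inr ⟨ha, hb, hx⟩
  · have hB' : a'^2 = S^2 + 1 := by linarith [sub_eq_zero.mp hB]
    have ha'le : a'^2 ≤ 1 := by nlinarith [sq_nonneg b']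
    have hS2 : S^2 = 0 := by linarith [sq_nonneg S]
    have hS0 : S = 0 := sq_eq_zero_iff.mp hS2
    have ha'2 : a'^2 = 1 := by rw [hB', hS2]; ring
    have hb'2 : b'^2 = 0 := by linarith
    have hb' : b' = 0 := sq_eq_zero_iff.mp hb'2
    have ha2 : a^2 = S'^2 + 1 := by
      linear_combination e1 + (S'^2+1)*ha'2 - a^2*S*hS0
    have hale : a^2 ≤ 1 := by linarith [sq_nonneg b]
    have hS'2 : S'^2 = 0 := by linarith [sq_nonneg S']
    have hS'0 : S' = 0 := sq_eq_zero_iff.mp hS'2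
    have ha2' : a^2 = 1 := by rw [ha2, hS'2]; ring
    have hb2 : b^2 = 0 := by linarith
    have hb : b = 0 := sq_eq_zero_iff.mp hb2
    have hx : x = 0 := Real.sinh_injective (by rw [← Real.sinh_zero] at hS0; exact hS0)
    have hx' : x' = 0 := Real.sinh_injective (by rw [← Real.sinh_zero] at hS'0; exact hS'0)
    have ha : a' = a := by
      have := h1
      rw [hx, hx', Real.cosh_zero, mul_one, mul_one] at this
      exact this.symm
    exact Or.inl ⟨ha, by rw [hb, hb'], by rw [hx, hx']⟩

theorem surjJ {P Q : ℝ} (h : P^2 + Q^2 ≤ 1) :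
    ∃ a b x : ℝ, a^2 + b^2 = 1 ∧ |x| ≤ 1 ∧
      a * Real.cosh x = P * Real.cosh 1 ∧ b * Real.sinh x = Q * Real.sinh 1 := by
  have hs1 : (0:ℝ) < Real.sinh 1 := Real.sinh_pos_iff.mpr one_pos
  by_cases hQ : Q = 0
  · subst hQ
    set p := P * Real.cosh 1 with hp
    have hP1 : P^2 ≤ 1 := by nlinarith
    by_cases hp1 : |p| ≤ 1
    · refine ⟨p, Real.sqrt (1 - p^2), 0, ?_, by simp, ?_, ?_⟩
      · rw [Real.sq_sqrt (by nlinarith [sq_abs p, abs_nonneg p])]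
        ring
      · rw [Real.cosh_zero, mul_one]
      · rw [Real.sinh_zero, mul_zero, zero_mul]
    · push_neg at hp1
      have hple : |p| ≤ Real.cosh 1 := by
        rw [hp, abs_mul, abs_of_pos (Real.cosh_pos 1)]
        nlinarith [abs_nonneg P, sq_abs P, Real.cosh_pos 1]
      have hmem : |p| ∈ Set.Icc (Real.cosh 0) (Real.cosh 1) := by
        rw [Real.cosh_zero]; exact ⟨hp1.le, hple⟩
      obtain ⟨x₀, hx₀, hcx⟩ := intermediate_value_Icc (by norm_num : (0:ℝ) ≤ 1)
        Real.continuous_cosh.continuousOn hmem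
      have hpne : p ≠ 0 := by intro h0; rw [h0] at hp1; simp at hp1; linarith
      have habs : |p| ≠ 0 := abs_ne_zero.mpr hpne
      refine ⟨p / |p|, 0, x₀, ?_, ?_, ?_, ?_⟩
      · rw [div_pow, sq_abs, div_self (by positivity : p^2 ≠ 0)]; ring
      · rw [abs_le]; exact ⟨by linarith [hx₀.1], hx₀.2⟩
      · rw [hcx, div_mul_cancel₀ _ habs]
      · rw [zero_mul, zero_mul]
  · set p := P * Real.cosh 1 with hp
    set q := Q * Real.sinh 1 with hq
    set f : ℝ → ℝ := fun x =>
      Real.sinh x^2 * Real.cosh x^2 - p^2 * Real.sinh x^2 - q^2 * Real.cosh x^2 with hf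
    have hf0 : f 0 < 0 := by
      have : q ≠ 0 := by
        rw [hq]; exact mul_ne_zero hQ hs1.ne'
      simp only [hf, Real.sinh_zero, Real.cosh_zero]
      nlinarith [sq_nonneg q, sq_abs q, abs_pos.mpr this]
    have hf1 : 0 ≤ f 1 := by
      simp only [hf, hp, hq]
      nlinarith [sq_nonneg (Real.sinh 1 * Real.cosh 1), Real.cosh_pos 1]
    have hmem : (0:ℝ) ∈ Set.Icc (f 0) (f 1) := ⟨hf0.le, hf1⟩
    have hfc : Continuous f := by
      apply Continuous.sub
      apply Continuous.sub
      · exact (Real.continuous_sinh.pow 2).mul (Real.continuous_cosh.pow 2)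
      · exact continuous_const.mul (Real.continuous_sinh.pow 2)
      · exact continuous_const.mul (Real.continuous_cosh.pow 2)
    obtain ⟨x₀, hx₀, hfx⟩ := intermediate_value_Icc (by norm_num : (0:ℝ) ≤ 1)
      hfc.continuousOn hmem
    have hx₀0 : x₀ ≠ 0 := by intro h0; rw [h0] at hfx; linarith
    have hx₀pos : 0 < x₀ := lt_of_le_of_ne hx₀.1 (Ne.symm hx₀0)
    have hsx : 0 < Real.sinh x₀ := Real.sinh_pos_iff.mpr hx₀pos
    have hcx : 0 < Real.cosh x₀ := Real.cosh_pos x₀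
    refine ⟨p / Real.cosh x₀, q / Real.sinh x₀, x₀, ?_, ?_, ?_, ?_⟩
    · have heq : Real.sinh x₀^2 * Real.cosh x₀^2
          = p^2 * Real.sinh x₀^2 + q^2 * Real.cosh x₀^2 := by
        have := hfx; simp only [hf] at this; linarith
      field_simp
      linarith [heq]
    · rw [abs_le]; exact ⟨by linarith [hx₀.1], hx₀.2⟩
    · rw [div_mul_cancel₀ _ hcx.ne']
    · rw [div_mul_cancel₀ _ hsx.ne']

/-! ### The invariant map -/

/-- disk → square homeomorphic rescaling -/
noncomputable def Dsq (w : ℂ) : ℂ := cser Nsq w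

theorem Dsq_rho (w : ℂ) : Dsq (-(starRingEnd ℂ) w) = -(starRingEnd ℂ) (Dsq w) := by
  by_cases hw : w = 0
  · simp [hw, Dsq, cser]
  · have hne : -(starRingEnd ℂ) w ≠ 0 := by
      simpa using hw
    have hnorm : ‖-(starRingEnd ℂ) w‖ = ‖w‖ := by
      rw [norm_neg, RCLike.norm_conj]
    have hNsq : Nsq (-(starRingEnd ℂ) w) = Nsq w := by
      simp [Nsq, Complex.neg_re, Complex.neg_im, Complex.conj_re, Complex.conj_im,
        abs_neg]
    unfold Dsq cser
    rw [if_neg hne, if_neg hw, hnorm, hNsq]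
    apply Complex.ext <;>
      simp [Complex.smul_re, Complex.smul_im, Complex.neg_re, Complex.neg_im,
        Complex.conj_re, Complex.conj_im]

noncomputable def Gmap (z w : ℂ) : E3 :=
  mkv (z.re * Real.cosh ((Dsq w).re) / Real.cosh 1)
      (z.im * Real.sinh ((Dsq w).re) / Real.sinh 1)
      ((Dsq w).im)

theorem Gmap_inv (z w : ℂ) :
    Gmap ((starRingEnd ℂ) z) (-(starRingEnd ℂ) w) = Gmap z w := by
  unfold Gmap
  rw [Dsq_rho]
  simp only [Complex.neg_re, Complex.neg_im, Complex.conj_re, Complex.conj_im,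
    Real.cosh_neg, Real.sinh_neg, neg_neg, neg_mul, mul_neg]

theorem sq_circle {z : ℂ} (hz : z ∈ S1) : z.re^2 + z.im^2 = 1 := by
  have h1 : ‖z‖ = 1 := hz
  have h2 : ‖z‖ ^ 2 = 1 := by rw [h1]; norm_num
  rw [Complex.sq_norm, Complex.normSq_apply] at h2
  nlinarith [h2]

theorem Dsq_re_le {w : ℂ} (hw : w ∈ D2) : |(Dsq w).re| ≤ 1 ∧ |(Dsq w).im| ≤ 1 := by
  have h1 : Nsq (Dsq w) = ‖w‖ := goodNsq.N_cser w
  have h2 : ‖w‖ ≤ 1 := by exact hw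
  constructor
  · exact le_trans (le_trans (le_max_left _ _) h1.le) h2
  · exact le_trans (le_trans (le_max_right _ _) h1.le) h2

theorem Gmap_mem {z w : ℂ} (hz : z ∈ S1) (hw : w ∈ D2) : Ncyl (Gmap z w) ≤ 1 := by
  obtain ⟨hx, hy⟩ := Dsq_re_le hw
  have hzz := sq_circle hz
  set x := (Dsq w).re
  have hc1 : (0:ℝ) < Real.cosh 1 := Real.cosh_pos 1
  have hs1 : (0:ℝ) < Real.sinh 1 := Real.sinh_pos_iff.mpr one_pos
  have hcc : Real.cosh x ≤ Real.cosh 1 := by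
    rw [Real.cosh_le_cosh, abs_one]; exact hx
  have hcpos : (0:ℝ) < Real.cosh x := Real.cosh_pos x
  have hss : |Real.sinh x| ≤ Real.sinh 1 := by
    rw [abs_le]
    constructor
    · rw [show -Real.sinh 1 = Real.sinh (-1) from (Real.sinh_neg 1).symm]
      rw [Real.sinh_le_sinh]
      linarith [abs_le.mp hx |>.1]
    · rw [Real.sinh_le_sinh]
      linarith [abs_le.mp hx |>.2]
  have hu2 : (Real.cosh x / Real.cosh 1)^2 ≤ 1 := by
    rw [div_pow]
    rw [div_le_one (by positivity)]
    nlinarith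
  have ht2 : (Real.sinh x / Real.sinh 1)^2 ≤ 1 := by
    rw [div_pow]
    rw [div_le_one (by positivity)]
    nlinarith [sq_abs (Real.sinh x), abs_nonneg (Real.sinh x)]
  have hPQ : (z.re * Real.cosh x / Real.cosh 1)^2 + (z.im * Real.sinh x / Real.sinh 1)^2 ≤ 1 := by
    have e1 : (z.re * Real.cosh x / Real.cosh 1)^2
        = z.re^2 * (Real.cosh x / Real.cosh 1)^2 := by ring
    have e2 : (z.im * Real.sinh x / Real.sinh 1)^2
        = z.im^2 * (Real.sinh x / Real.sinh 1)^2 := by ring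
    rw [e1, e2]
    nlinarith [sq_nonneg z.re, sq_nonneg z.im, hu2, ht2]
  unfold Gmap Ncyl
  rw [mkv_apply0, mkv_apply1, mkv_apply2]
  apply max_le
  · exact Real.sqrt_le_one.mpr hPQ
  · exact hy

theorem Gmap_inj {z w z' w' : ℂ} (hz : z ∈ S1) (hw : w ∈ D2) (hz' : z' ∈ S1) (hw' : w' ∈ D2)
    (h : Gmap z' w' = Gmap z w) :
    (z' = z ∧ w' = w) ∨ (z' = (starRingEnd ℂ) z ∧ w' = -(starRingEnd ℂ) w) := by
  have hc1 : (0:ℝ) < Real.cosh 1 := Real.cosh_pos 1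
  have hs1 : (0:ℝ) < Real.sinh 1 := Real.sinh_pos_iff.mpr one_pos
  have h0 : z'.re * Real.cosh ((Dsq w').re) / Real.cosh 1
      = z.re * Real.cosh ((Dsq w).re) / Real.cosh 1 := by
    have := congrArg (fun v => v 0) h
    simpa [Gmap] using this
  have h1 : z'.im * Real.sinh ((Dsq w').re) / Real.sinh 1
      = z.im * Real.sinh ((Dsq w).re) / Real.sinh 1 := by
    have := congrArg (fun v => v 1) h
    simpa [Gmap] using this
  have h2 : (Dsq w').im = (Dsq w).im := by
    have := congrArg (fun v => v 2) h
    simpa [Gmap] using this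
  have h0' : z.re * Real.cosh ((Dsq w).re) = z'.re * Real.cosh ((Dsq w').re) := by
    field_simp at h0
    linarith
  have h1' : z.im * Real.sinh ((Dsq w).re) = z'.im * Real.sinh ((Dsq w').re) := by
    field_simp at h1
    linarith
  rcases fold (sq_circle hz) (sq_circle hz') h0' h1' with ⟨ha, hb, hx⟩ | ⟨ha, hb, hx⟩
  · left
    constructor
    · exact Complex.ext ha hb
    · have hDD : Dsq w' = Dsq w := Complex.ext hx h2
      have h3 := congrArg (resc Nsq) hDD
      rw [show resc Nsq (Dsq w') = w' from goodNsq.resc_cser w',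
        show resc Nsq (Dsq w) = w from goodNsq.resc_cser w] at h3
      exact h3
  · right
    constructor
    · exact Complex.ext (by rw [Complex.conj_re]; exact ha) (by rw [Complex.conj_im]; exact hb)
    · have hD : Dsq w' = -(starRingEnd ℂ) (Dsq w) := by
        apply Complex.ext
        · simpa using hx
        · simpa using h2
      rw [← Dsq_rho] at hD
      have h3 := congrArg (resc Nsq) hD
      rw [show resc Nsq (Dsq w') = w' from goodNsq.resc_cser w',
        show resc Nsq (Dsq (-(starRingEnd ℂ) w)) = -(starRingEnd ℂ) w from
          goodNsq.resc_cser _] at h3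
      exact h3

theorem Gmap_surj {v : E3} (hv : Ncyl v ≤ 1) :
    ∃ z w : ℂ, z ∈ S1 ∧ w ∈ D2 ∧ Gmap z w = v := by
  have hsq : Real.sqrt ((v 0)^2 + (v 1)^2) ≤ 1 := le_trans (le_max_left _ _) hv
  have hY : |v 2| ≤ 1 := le_trans (le_max_right _ _) hv
  have hPQ : (v 0)^2 + (v 1)^2 ≤ 1 := by
    have h := Real.sq_sqrt (by positivity : (0:ℝ) ≤ (v 0)^2 + (v 1)^2)
    nlinarith [Real.sqrt_nonneg ((v 0)^2 + (v 1)^2)]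
  obtain ⟨a, b, x₀, hab, hx₀, hA, hB⟩ := surjJ hPQ
  have hc1 : (0:ℝ) < Real.cosh 1 := Real.cosh_pos 1
  have hs1 : (0:ℝ) < Real.sinh 1 := Real.sinh_pos_iff.mpr one_pos
  set u : ℂ := ⟨x₀, v 2⟩ with hu
  set w : ℂ := resc Nsq u with hwdef
  set z : ℂ := ⟨a, b⟩ with hzdef
  have hzS : z ∈ S1 := by
    show ‖z‖ = 1
    rw [Complex.norm_def, Complex.normSq_apply]
    rw [show z.re * z.re + z.im * z.im = a^2 + b^2 from by rw [hzdef]; ring, hab,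
      Real.sqrt_one]
  have hwD : w ∈ D2 := by
    show ‖w‖ ≤ 1
    rw [hwdef, goodNsq.norm_resc]
    apply max_le
    · exact hx₀
    · exact hY
  have hDsq : Dsq w = u := goodNsq.cser_resc u
  refine ⟨z, w, hzS, hwD, ?_⟩
  unfold Gmap
  rw [hDsq]
  have e0 : z.re * Real.cosh u.re / Real.cosh 1 = v 0 := by
    rw [show z.re = a from rfl, show u.re = x₀ from rfl, hA]
    field_simp
  have e1 : z.im * Real.sinh u.re / Real.sinh 1 = v 1 := by
    rw [show z.im = b from rfl, show u.re = x₀ from rfl, hB]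
    field_simp
  have e2 : u.im = v 2 := rfl
  rw [e0, e1, e2, mkv_self]

/-! ### Assembling the quotient map -/

noncomputable def Fm (p : ↥(S1 ×ˢ S1 ×ˢ D2)) :
    ↥S1 × ↥(Metric.closedBall (0 : EuclideanSpace ℝ (Fin 3)) 1) :=
  (⟨p.val.1, p.property.1⟩,
   ⟨resc Ncyl (Gmap p.val.2.1 p.val.2.2), by
     rw [Metric.mem_closedBall, dist_zero_right, goodNcyl.norm_resc]
     exact Gmap_mem p.property.2.1 p.property.2.2⟩)

theorem Fm_tau (p : ↥(S1 ×ˢ S1 ×ˢ D2)) : Fm (tau p) = Fm p := by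
  refine Prod.ext (Subtype.ext rfl) (Subtype.ext ?_)
  show resc Ncyl (Gmap ((starRingEnd ℂ) p.val.2.1) (-(starRingEnd ℂ) p.val.2.2))
      = resc Ncyl (Gmap p.val.2.1 p.val.2.2)
  rw [Gmap_inv]

theorem Fm_cont : Continuous Fm := by
  have hval : Continuous fun p : ↥(S1 ×ˢ S1 ×ˢ D2) => p.val := continuous_subtype_val
  apply Continuous.prodMk
  · exact (hval.fst).subtype_mk _
  · apply Continuous.subtype_mk
    apply goodNcyl.continuous_resc.comp
    have hz : Continuous fun p : ↥(S1 ×ˢ S1 ×ˢ D2) => p.val.2.1 := hval.snd.fst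
    have hw : Continuous fun p : ↥(S1 ×ˢ S1 ×ˢ D2) => p.val.2.2 := hval.snd.snd
    have hDsq : Continuous fun p : ↥(S1 ×ˢ S1 ×ˢ D2) => Dsq (p.val.2.2) :=
      goodNsq.continuous_cser.comp hw
    unfold Gmap
    apply continuous_mkv
    · exact (((Complex.continuous_re.comp hz).mul
        (Real.continuous_cosh.comp (Complex.continuous_re.comp hDsq)))).div_const _
    · exact (((Complex.continuous_im.comp hz).mul
        (Real.continuous_sinh.comp (Complex.continuous_re.comp hDsq)))).div_const _
    · exact Complex.continuous_im.comp hDsq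

/-- The quotient of `S¹ × S¹ × D²` by the identification of each point with its
image under `τ` is homeomorphic to `S¹ × D³`, the product of the circle with the
closed unit ball in `ℝ³`. -/
theorem stmt8 :
    Nonempty (Quot (fun a b => b = tau a) ≃ₜ
      ↥S1 × ↥(Metric.closedBall (0 : EuclideanSpace ℝ (Fin 3)) 1)) := by
  classical
  have hS1c : IsCompact S1 := by
    have hs : S1 = Metric.sphere (0:ℂ) 1 := by
      ext z
      simp [S1, Metric.mem_sphere, Complex.dist_eq]
    rw [hs]; exact isCompact_sphere 0 1
  have hD2c : IsCompact D2 := by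
    have hd : D2 = Metric.closedBall (0:ℂ) 1 := by
      ext z
      simp [D2, Metric.mem_closedBall, Complex.dist_eq]
    rw [hd]; exact isCompact_closedBall 0 1
  haveI : CompactSpace ↥(S1 ×ˢ S1 ×ˢ D2) :=
    isCompact_iff_compactSpace.mp (hS1c.prod (hS1c.prod hD2c))
  have hresp : ∀ a b, (fun a b => b = tau a) a b → Fm a = Fm b := by
    intro a b hab
    rw [hab, Fm_tau]
  let f : Quot (fun a b => b = tau a) →
      ↥S1 × ↥(Metric.closedBall (0 : EuclideanSpace ℝ (Fin 3)) 1) :=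
    Quot.lift Fm hresp
  have hcont : Continuous f := continuous_quot_lift hresp Fm_cont
  have hinj : Function.Injective f := by
    intro qa qb hq
    obtain ⟨p, rfl⟩ := Quot.exists_rep qa
    obtain ⟨p', rfl⟩ := Quot.exists_rep qb
    have hpp' : Fm p = Fm p' := hq
    have ht : p.val.1 = p'.val.1 := congrArg (fun y => (y.1 : ℂ)) hpp'
    have hres : resc Ncyl (Gmap p.val.2.1 p.val.2.2)
        = resc Ncyl (Gmap p'.val.2.1 p'.val.2.2) :=
      congrArg (fun y => (y.2 : E3)) hpp'
    have hG : Gmap p'.val.2.1 p'.val.2.2 = Gmap p.val.2.1 p.val.2.2 := by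
      have := congrArg (cser Ncyl) hres
      rw [goodNcyl.cser_resc, goodNcyl.cser_resc] at this
      exact this.symm
    rcases Gmap_inj p.property.2.1 p.property.2.2 p'.property.2.1 p'.property.2.2 hG with
      ⟨hzeq, hweq⟩ | ⟨hzeq, hweq⟩
    · have : p = p' := by
        apply Subtype.ext
        exact Prod.ext ht (Prod.ext hzeq.symm hweq.symm)
      rw [this]
    · have hp' : p' = tau p := by
        apply Subtype.ext
        show p'.val = ((p.val.1, (starRingEnd ℂ) p.val.2.1, -(starRingEnd ℂ) p.val.2.2) :
          ℂ × ℂ × ℂ)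
        exact Prod.ext ht.symm (Prod.ext hzeq hweq)
      rw [hp']
      exact (Quot.sound (rfl : tau p = tau p))
  have hsurj : Function.Surjective f := by
    rintro ⟨⟨t, ht⟩, ⟨u, hu⟩⟩
    have hu' : ‖u‖ ≤ 1 := by rwa [Metric.mem_closedBall, dist_zero_right] at hu
    have hNv : Ncyl (cser Ncyl u) ≤ 1 := by rw [goodNcyl.N_cser]; exact hu'
    obtain ⟨z, w, hz, hw, hG⟩ := Gmap_surj hNv
    refine ⟨Quot.mk _ ⟨(t, z, w), ⟨ht, hz, hw⟩⟩, ?_⟩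
    show Fm ⟨(t, z, w), ⟨ht, hz, hw⟩⟩ = (⟨t, ht⟩, ⟨u, hu⟩)
    refine Prod.ext (Subtype.ext rfl) (Subtype.ext ?_)
    show resc Ncyl (Gmap z w) = u
    rw [hG, goodNcyl.resc_cser]
  exact ⟨Continuous.homeoOfEquivCompactToT2 (f := Equiv.ofBijective f ⟨hinj, hsurj⟩) hcont⟩
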